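/- arXiv:cond-mat/0407087 — 3 statements merged into one kernel-verified Lean document; each statement's English description precedes it below -/
import Mathlib

section
/- Let M be an n×n real matrix whose entries are such that all matchings of distinct sizes have distinct weights (generic weights). For 1 ≤ k ≤ n-1, let t_k denote the minimum total weight over all matchings (sets of entries no two of which share a row or column) of size k in M. Then for all 2 ≤ k ≤ n-1, t_{k+1} + t_{k-1} ≥ 2·t_k, i.e., the sequence of increments t_{k+1} - t_k is nondecreasing in k. -/
open Finset

/-- A matching in an `n × n` matrix: a set of cells no two of which share a row or a column. -/
def Matrix.IsCellMatching {n : ℕ} (S : Finset (Fin n × Fin n)) : Prop :=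
  ∀ p ∈ S, ∀ q ∈ S, p ≠ q → p.1 ≠ q.1 ∧ p.2 ≠ q.2

/-- The weight of a set of cells of the matrix `M`. -/
def Matrix.cellWeight {n : ℕ} (M : Fin n → Fin n → ℝ) (S : Finset (Fin n × Fin n)) : ℝ :=
  ∑ p ∈ S, M p.1 p.2

namespace MinMatchAux

/-- Two cells are adjacent if distinct and sharing a row or a column. -/
def adj {n : ℕ} (p q : Fin n × Fin n) : Prop := p ≠ q ∧ (p.1 = q.1 ∨ p.2 = q.2)

instance {n : ℕ} : DecidableRel (@adj n) :=
  fun p q => inferInstanceAs (Decidable (p ≠ q ∧ (p.1 = q.1 ∨ p.2 = q.2)))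

lemma adj_symm {n : ℕ} {p q : Fin n × Fin n} (h : adj p q) : adj q p :=
  ⟨h.1.symm, h.2.imp Eq.symm Eq.symm⟩

lemma adj_irrefl {n : ℕ} (p : Fin n × Fin n) : ¬ adj p p := fun h => h.1 rfl

/-- A connected graph with vertex set `C` has total degree at least `2*(|C|-1)`. -/
lemma sum_deg_ge {α : Type*} [DecidableEq α] (e : α → α → Prop) [DecidableRel e]
    (hsym : ∀ a b, e a b → e b a) (hirr : ∀ a, ¬ e a a) :
    ∀ (N : ℕ) (C : Finset α), C.card ≤ N → C.Nonempty →
      (∀ p ∈ C, ∀ q ∈ C, Relation.ReflTransGen (fun a b => a ∈ C ∧ b ∈ C ∧ e a b) p q) →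
      2 * (C.card - 1) ≤ ∑ p ∈ C, (C.filter (e p)).card := by
  intro N
  induction N with
  | zero =>
      intro C hc hne _
      have := hne.card_pos
      omega
  | succ N ih =>
      intro C hc hne hconn
      by_cases hdeg : ∀ p ∈ C, 2 ≤ (C.filter (e p)).card
      · have h1 : ∑ p ∈ C, 2 ≤ ∑ p ∈ C, (C.filter (e p)).card := Finset.sum_le_sum hdeg
        have h2 : ∑ _p ∈ C, 2 = C.card * 2 := by
          rw [Finset.sum_const, smul_eq_mul]
        omega
      · push_neg at hdeg
        obtain ⟨v, hv, hdv⟩ := hdeg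
        rcases Nat.lt_or_ge C.card 2 with hc2 | hc2
        · have h0 : 2 * (C.card - 1) = 0 := by omega
          rw [h0]; exact Nat.zero_le _
        have hdv1 : (C.filter (e v)).card ≤ 1 := by omega
        rcases Nat.eq_zero_or_pos (C.filter (e v)).card with h0 | hpos
        · exfalso
          obtain ⟨w, hw, hwv⟩ := Finset.exists_mem_ne hc2 v
          rcases Relation.ReflTransGen.cases_head (hconn v hv w hw) with h | ⟨c, hvc, _⟩
          · exact hwv h.symm
          · have hcmem : c ∈ C.filter (e v) := Finset.mem_filter.mpr ⟨hvc.2.1, hvc.2.2⟩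
            have := Finset.card_pos.mpr ⟨c, hcmem⟩
            omega
        · have h1 : (C.filter (e v)).card = 1 := le_antisymm hdv1 hpos
          obtain ⟨w, hwset⟩ := Finset.card_eq_one.mp h1
          have hwmem : w ∈ C.filter (e v) := by rw [hwset]; exact Finset.mem_singleton_self w
          have hwC : w ∈ C := (Finset.mem_filter.mp hwmem).1
          have hevw : e v w := (Finset.mem_filter.mp hwmem).2
          have hwv : w ≠ v := by rintro rfl; exact hirr w hevw
          set C' := C.erase v with hC'
          have hsubC' : C' ⊆ C := Finset.erase_subset v C
          have hwC' : w ∈ C' := Finset.mem_erase.mpr ⟨hwv, hwC⟩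
          have hcard' : C'.card = C.card - 1 := Finset.card_erase_of_mem hv
          have key : ∀ a b, Relation.ReflTransGen (fun x y => x ∈ C ∧ y ∈ C ∧ e x y) a b →
              Relation.ReflTransGen (fun x y => x ∈ C' ∧ y ∈ C' ∧ e x y)
                (if a = v then w else a) (if b = v then w else b) := by
            intro a b h
            induction h with
            | refl => exact Relation.ReflTransGen.refl
            | @tail b c hab hbc ihab =>
              obtain ⟨hb, hcC, hebc⟩ := hbc
              by_cases hbv : b = v
              · subst hbv
                have hcw : c = w := by
                  have : c ∈ C.filter (e b) := Finset.mem_filter.mpr ⟨hcC, hebc⟩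
                  rw [hwset] at this; exact Finset.mem_singleton.mp this
                subst hcw
                simpa [hwv] using ihab
              · by_cases hcv : c = v
                · subst hcv
                  have hbw : b = w := by
                    have : b ∈ C.filter (e c) := Finset.mem_filter.mpr ⟨hb, hsym _ _ hebc⟩
                    rw [hwset] at this; exact Finset.mem_singleton.mp this
                  rw [if_neg hbv, hbw] at ihab
                  simpa using ihab
                · rw [if_neg hbv] at ihab
                  rw [if_neg hcv]
                  exact ihab.tail ⟨Finset.mem_erase.mpr ⟨hbv, hb⟩,
                    Finset.mem_erase.mpr ⟨hcv, hcC⟩, hebc⟩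
          have hconn' : ∀ p ∈ C', ∀ q ∈ C',
              Relation.ReflTransGen (fun a b => a ∈ C' ∧ b ∈ C' ∧ e a b) p q := by
            intro p hp q hq
            have hpv : p ≠ v := (Finset.mem_erase.mp hp).1
            have hqv : q ≠ v := (Finset.mem_erase.mp hq).1
            have := key p q (hconn p (hsubC' hp) q (hsubC' hq))
            rwa [if_neg hpv, if_neg hqv] at this
          have IH := ih C' (by omega) ⟨w, hwC'⟩ hconn'
          have hsplit : ∑ p ∈ C, (C.filter (e p)).card
              = (C.filter (e v)).card + ∑ p ∈ C', (C.filter (e p)).card :=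
            (Finset.add_sum_erase C _ hv).symm
          have hw1 : (C'.filter (e w)).card + 1 = (C.filter (e w)).card := by
            have hvf : v ∈ C.filter (e w) := Finset.mem_filter.mpr ⟨hv, hsym _ _ hevw⟩
            have heq : C'.filter (e w) = (C.filter (e w)).erase v := by rw [hC', Finset.filter_erase]
            have hle : 1 ≤ (C.filter (e w)).card := Finset.card_pos.mpr ⟨v, hvf⟩
            rw [heq, Finset.card_erase_of_mem hvf]
            omega
          have hsum2 : ∑ p ∈ C', (C'.filter (e p)).card + 1 ≤ ∑ p ∈ C', (C.filter (e p)).card := by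
            rw [← Finset.add_sum_erase C' (fun p => (C'.filter (e p)).card) hwC',
                ← Finset.add_sum_erase C' (fun p => (C.filter (e p)).card) hwC']
            have hmono : ∑ p ∈ C'.erase w, (C'.filter (e p)).card
                ≤ ∑ p ∈ C'.erase w, (C.filter (e p)).card :=
              Finset.sum_le_sum fun p _ =>
                Finset.card_le_card (Finset.filter_subset_filter _ hsubC')
            omega
          omega


def Reach {n : ℕ} (U : Finset (Fin n × Fin n)) : (Fin n × Fin n) → (Fin n × Fin n) → Prop :=
  Relation.ReflTransGen (fun a b => a ∈ U ∧ b ∈ U ∧ adj a b)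

open scoped Classical in
noncomputable def comp {n : ℕ} (U : Finset (Fin n × Fin n)) (p : Fin n × Fin n) :
    Finset (Fin n × Fin n) :=
  U.filter (Reach U p)

lemma mem_comp {n : ℕ} {U : Finset (Fin n × Fin n)} {p q : Fin n × Fin n} :
    q ∈ comp U p ↔ q ∈ U ∧ Reach U p q := by
  classical
  simp [comp]

lemma comp_subset {n : ℕ} (U : Finset (Fin n × Fin n)) (p : Fin n × Fin n) :
    comp U p ⊆ U := fun q hq => (mem_comp.mp hq).1

lemma mem_comp_self {n : ℕ} {U : Finset (Fin n × Fin n)} {p : Fin n × Fin n} (hp : p ∈ U) :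
    p ∈ comp U p := mem_comp.mpr ⟨hp, Relation.ReflTransGen.refl⟩

lemma comp_closed {n : ℕ} {U : Finset (Fin n × Fin n)} {p q q' : Fin n × Fin n}
    (hq : q ∈ comp U p) (hq' : q' ∈ U) (ha : adj q q') : q' ∈ comp U p := by
  obtain ⟨hqU, hr⟩ := mem_comp.mp hq
  exact mem_comp.mpr ⟨hq', hr.tail ⟨hqU, hq', ha⟩⟩

lemma reach_lift {n : ℕ} {U : Finset (Fin n × Fin n)} {p a b : Fin n × Fin n}
    (h : Reach U a b) :
    a ∈ comp U p →
    Relation.ReflTransGen (fun x y => x ∈ comp U p ∧ y ∈ comp U p ∧ adj x y) a b := by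
  induction h using Relation.ReflTransGen.head_induction_on with
  | refl => exact fun _ => Relation.ReflTransGen.refl
  | head h' h'' ih =>
      intro ha
      have hc := comp_closed ha h'.2.1 h'.2.2
      exact Relation.ReflTransGen.head ⟨ha, hc, h'.2.2⟩ (ih hc)

lemma comp_conn {n : ℕ} {U : Finset (Fin n × Fin n)} {p : Fin n × Fin n} :
    ∀ a ∈ comp U p, ∀ b ∈ comp U p,
      Relation.ReflTransGen (fun x y => x ∈ comp U p ∧ y ∈ comp U p ∧ adj x y) a b := by
  intro a ha b hb
  have hsym : Symmetric (fun x y : Fin n × Fin n => x ∈ U ∧ y ∈ U ∧ adj x y) :=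
    fun x y h => ⟨h.2.1, h.1, adj_symm h.2.2⟩
  have h1 : Reach U a p := by
    haveI : Std.Symm (fun x y : Fin n × Fin n => x ∈ U ∧ y ∈ U ∧ adj x y) := ⟨fun _ _ h => hsym h⟩
    exact Relation.ReflTransGen.symmetric.symm _ _ (mem_comp.mp ha).2
  have h2 : Reach U a b := h1.trans (mem_comp.mp hb).2
  exact reach_lift h2 ha


lemma comp_bound {n : ℕ} {A B : Finset (Fin n × Fin n)}
    (hA : Matrix.IsCellMatching A) (hB : Matrix.IsCellMatching B)
    {C : Finset (Fin n × Fin n)} (hCU : C ⊆ A ∪ B)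
    (hconn : ∀ p ∈ C, ∀ q ∈ C,
      Relation.ReflTransGen (fun a b => a ∈ C ∧ b ∈ C ∧ adj a b) p q) :
    (A ∩ C).card ≤ (B ∩ C).card + 1 := by
  rcases Nat.lt_or_ge C.card 2 with hc2 | hc2
  · have : (A ∩ C).card ≤ C.card := Finset.card_le_card Finset.inter_subset_right
    omega
  have hAB : ∀ p ∈ C, ¬ (p ∈ A ∧ p ∈ B) := by
    rintro p hp ⟨hpA, hpB⟩
    obtain ⟨q, hq, hqp⟩ := Finset.exists_mem_ne hc2 p
    rcases Relation.ReflTransGen.cases_head (hconn p hp q hq) with h | ⟨c, ⟨_, hcC, hadj⟩, _⟩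
    · exact hqp h.symm
    · rcases Finset.mem_union.mp (hCU hcC) with hcA | hcB
      · rcases hadj.2 with h | h
        · exact (hA p hpA c hcA hadj.1).1 h
        · exact (hA p hpA c hcA hadj.1).2 h
      · rcases hadj.2 with h | h
        · exact (hB p hpB c hcB hadj.1).1 h
        · exact (hB p hpB c hcB hadj.1).2 h
  set X := A ∩ C with hX
  set Y := B ∩ C with hY
  have hXY : Disjoint X Y := by
    rw [Finset.disjoint_left]
    intro p hpX hpY
    exact hAB p (Finset.mem_inter.mp hpX).2
      ⟨(Finset.mem_inter.mp hpX).1, (Finset.mem_inter.mp hpY).1⟩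
  have hXYC : X ∪ Y = C := by
    apply Finset.Subset.antisymm
    · exact Finset.union_subset Finset.inter_subset_right Finset.inter_subset_right
    · intro p hp
      rcases Finset.mem_union.mp (hCU hp) with h | h
      · exact Finset.mem_union_left _ (Finset.mem_inter.mpr ⟨h, hp⟩)
      · exact Finset.mem_union_right _ (Finset.mem_inter.mpr ⟨h, hp⟩)
  have hnbX : ∀ x ∈ X, C.filter (adj x) ⊆ Y := by
    intro x hx q hq
    obtain ⟨hqC, hadj⟩ := Finset.mem_filter.mp hq
    rcases Finset.mem_union.mp (hCU hqC) with hqA | hqB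
    · exfalso
      rcases hadj.2 with h | h
      · exact (hA x (Finset.mem_inter.mp hx).1 q hqA hadj.1).1 h
      · exact (hA x (Finset.mem_inter.mp hx).1 q hqA hadj.1).2 h
    · exact Finset.mem_inter.mpr ⟨hqB, hqC⟩
  have hnbY : ∀ y ∈ Y, C.filter (adj y) ⊆ X := by
    intro y hy q hq
    obtain ⟨hqC, hadj⟩ := Finset.mem_filter.mp hq
    rcases Finset.mem_union.mp (hCU hqC) with hqA | hqB
    · exact Finset.mem_inter.mpr ⟨hqA, hqC⟩
    · exfalso
      rcases hadj.2 with h | h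
      · exact (hB y (Finset.mem_inter.mp hy).1 q hqB hadj.1).1 h
      · exact (hB y (Finset.mem_inter.mp hy).1 q hqB hadj.1).2 h
  have hdegY : ∀ y ∈ Y, (C.filter (adj y)).card ≤ 2 := by
    intro y hy
    have hcb : (C.filter (adj y)).card ≤ (Finset.univ : Finset Bool).card := by
      apply Finset.card_le_card_of_injOn (fun q => decide (q.1 = y.1))
        (fun q _ => Finset.mem_univ _)
      intro q hq q' hq' hqq'
      simp only [Finset.coe_filter, Set.mem_setOf_eq] at hq hq'
      have hqX := hnbY y hy (Finset.mem_filter.mpr hq)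
      have hq'X := hnbY y hy (Finset.mem_filter.mpr hq')
      by_contra hne
      obtain ⟨h1, h2⟩ := hA q (Finset.mem_inter.mp hqX).1 q' (Finset.mem_inter.mp hq'X).1 hne
      simp only [decide_eq_decide] at hqq'
      by_cases hrow : q.1 = y.1
      · exact h1 (hrow.trans (hqq'.mp hrow).symm)
      · have hrow' : ¬ q'.1 = y.1 := fun h => hrow (hqq'.mpr h)
        have hc1 : y.2 = q.2 := by
          rcases hq.2.2 with h | h
          · exact absurd h.symm hrow
          · exact h
        have hc1' : y.2 = q'.2 := by
          rcases hq'.2.2 with h | h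
          · exact absurd h.symm hrow'
          · exact h
        exact h2 (hc1.symm.trans hc1')
    simpa using hcb
  have hsum : ∑ p ∈ C, (C.filter (adj p)).card
      = ∑ x ∈ X, (C.filter (adj x)).card + ∑ y ∈ Y, (C.filter (adj y)).card := by
    have h := Finset.sum_union (f := fun p => (C.filter (adj p)).card) hXY
    rwa [hXYC] at h
  have he12 : ∑ x ∈ X, (C.filter (adj x)).card = ∑ y ∈ Y, (C.filter (adj y)).card := by
    have h1 : ∀ x ∈ X, (C.filter (adj x)).card = ∑ y ∈ Y, if adj x y then 1 else 0 := by
      intro x hx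
      rw [← Finset.card_filter]
      congr 1
      apply Finset.Subset.antisymm
      · intro q hq
        exact Finset.mem_filter.mpr ⟨hnbX x hx hq, (Finset.mem_filter.mp hq).2⟩
      · intro q hq
        exact Finset.mem_filter.mpr
          ⟨(Finset.mem_inter.mp (Finset.mem_filter.mp hq).1).2, (Finset.mem_filter.mp hq).2⟩
    have h2 : ∀ y ∈ Y, (C.filter (adj y)).card = ∑ x ∈ X, if adj y x then 1 else 0 := by
      intro y hy
      rw [← Finset.card_filter]
      congr 1
      apply Finset.Subset.antisymm
      · intro q hq
        exact Finset.mem_filter.mpr ⟨hnbY y hy hq, (Finset.mem_filter.mp hq).2⟩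
      · intro q hq
        exact Finset.mem_filter.mpr
          ⟨(Finset.mem_inter.mp (Finset.mem_filter.mp hq).1).2, (Finset.mem_filter.mp hq).2⟩
    rw [Finset.sum_congr rfl h1, Finset.sum_congr rfl h2, Finset.sum_comm]
    refine Finset.sum_congr rfl fun y _ => Finset.sum_congr rfl fun x _ => ?_
    have : adj x y ↔ adj y x := ⟨adj_symm, adj_symm⟩
    simp [this]
  have hP1 := sum_deg_ge adj (fun _ _ h => adj_symm h) adj_irrefl C.card C le_rfl
    (Finset.card_pos.mp (by omega)) hconn
  have hYdeg : ∑ y ∈ Y, (C.filter (adj y)).card ≤ Y.card * 2 := by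
    calc ∑ y ∈ Y, (C.filter (adj y)).card ≤ ∑ _y ∈ Y, 2 := Finset.sum_le_sum hdegY
      _ = Y.card * 2 := by rw [Finset.sum_const, smul_eq_mul]
  have hcards : X.card + Y.card = C.card := by
    rw [← Finset.card_union_of_disjoint hXY, hXYC]
  omega


lemma exists_good_comp {n : ℕ} :
    ∀ (N : ℕ) (A B : Finset (Fin n × Fin n)), (A ∪ B).card ≤ N →
      Matrix.IsCellMatching A → Matrix.IsCellMatching B → B.card + 1 ≤ A.card →
      ∃ C : Finset (Fin n × Fin n), C ⊆ A ∪ B ∧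
        (∀ p ∈ C, ∀ q ∈ A ∪ B, adj p q → q ∈ C) ∧
        (A ∩ C).card = (B ∩ C).card + 1 := by
  intro N
  induction N with
  | zero =>
      intro A B hN hA hB hAB
      have : A.card ≤ (A ∪ B).card := Finset.card_le_card Finset.subset_union_left
      omega
  | succ N ih =>
      intro A B hN hA hB hAB
      obtain ⟨a, ha⟩ : A.Nonempty := Finset.card_pos.mp (by omega)
      have haU : a ∈ A ∪ B := Finset.mem_union_left _ ha
      set C := comp (A ∪ B) a with hC
      have hCsub : C ⊆ A ∪ B := comp_subset _ _
      have hCclosed : ∀ p ∈ C, ∀ q ∈ A ∪ B, adj p q → q ∈ C :=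
        fun p hp q hq hadj => comp_closed hp hq hadj
      have hCconn := comp_conn (U := A ∪ B) (p := a)
      have hbound := comp_bound hA hB hCsub hCconn
      by_cases hcase : (A ∩ C).card = (B ∩ C).card + 1
      · exact ⟨C, hCsub, hCclosed, hcase⟩
      · have hle : (A ∩ C).card ≤ (B ∩ C).card := by omega
        have haC : a ∈ C := mem_comp_self haU
        have hCne : 1 ≤ C.card := Finset.card_pos.mpr ⟨a, haC⟩
        have hU' : (A \ C) ∪ (B \ C) = (A ∪ B) \ C := (Finset.union_sdiff_distrib _ _ _).symm
        have hA' : Matrix.IsCellMatching (A \ C) :=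
          fun p hp q hq hne => hA p (Finset.sdiff_subset hp) q (Finset.sdiff_subset hq) hne
        have hB' : Matrix.IsCellMatching (B \ C) :=
          fun p hp q hq hne => hB p (Finset.sdiff_subset hp) q (Finset.sdiff_subset hq) hne
        have hcard1 : (A \ C).card + (A ∩ C).card = A.card := Finset.card_sdiff_add_card_inter A C
        have hcard2 : (B \ C).card + (B ∩ C).card = B.card := Finset.card_sdiff_add_card_inter B C
        have hcardBC : (B ∩ C).card ≤ B.card := Finset.card_le_card Finset.inter_subset_left
        have hN' : ((A \ C) ∪ (B \ C)).card ≤ N := by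
          rw [hU', Finset.card_sdiff_of_subset hCsub]
          omega
        obtain ⟨C', h1, h2, h3⟩ := ih (A \ C) (B \ C) hN' hA' hB' (by omega)
        have h1' : C' ⊆ (A ∪ B) \ C := by rwa [hU'] at h1
        refine ⟨C', h1'.trans Finset.sdiff_subset, ?_, ?_⟩
        · intro p hp q hq hadj
          by_cases hqC : q ∈ C
          · exfalso
            have hpC : p ∈ C :=
              hCclosed q hqC p ((h1'.trans Finset.sdiff_subset) hp) (adj_symm hadj)
            exact (Finset.mem_sdiff.mp (h1' hp)).2 hpC
          · exact h2 p hp q (by rw [hU']; exact Finset.mem_sdiff.mpr ⟨hq, hqC⟩) hadj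
        · have hAeq : A ∩ C' = (A \ C) ∩ C' := by
            ext p
            simp only [Finset.mem_inter, Finset.mem_sdiff]
            constructor
            · rintro ⟨hpA, hpC'⟩
              exact ⟨⟨hpA, (Finset.mem_sdiff.mp (h1' hpC')).2⟩, hpC'⟩
            · rintro ⟨⟨hpA, _⟩, h⟩
              exact ⟨hpA, h⟩
          have hBeq : B ∩ C' = (B \ C) ∩ C' := by
            ext p
            simp only [Finset.mem_inter, Finset.mem_sdiff]
            constructor
            · rintro ⟨hpB, hpC'⟩
              exact ⟨⟨hpB, (Finset.mem_sdiff.mp (h1' hpC')).2⟩, hpC'⟩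
            · rintro ⟨⟨hpB, _⟩, h⟩
              exact ⟨hpB, h⟩
          rw [hAeq, hBeq]
          exact h3

end MinMatchAux

/-- for an `n × n` real matrix with nonnegative, generic entries (matchings of
distinct sizes have distinct weights), the minimum weight `t k` of a size-`k` matching
satisfies `t (k+1) + t (k-1) ≥ 2 * t k` for `2 ≤ k ≤ n - 1`; i.e. the increments
`t (k+1) - t k` are nondecreasing in `k`. -/
theorem min_matching_weight_convex (n : ℕ) (M : Fin n → Fin n → ℝ)
    (hM : ∀ i j, 0 ≤ M i j)
    (hgen : ∀ S T : Finset (Fin n × Fin n), Matrix.IsCellMatching S → Matrix.IsCellMatching T →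
      S.card ≠ T.card → Matrix.cellWeight M S ≠ Matrix.cellWeight M T)
    (t : ℕ → ℝ)
    (ht : ∀ k, 1 ≤ k → k ≤ n →
      IsLeast {x : ℝ | ∃ S : Finset (Fin n × Fin n),
        Matrix.IsCellMatching S ∧ S.card = k ∧ Matrix.cellWeight M S = x} (t k)) :
    ∀ k, 2 ≤ k → k ≤ n - 1 → t (k + 1) + t (k - 1) ≥ 2 * t k := by
  intro k hk2 hkn
  have hn3 : 3 ≤ n := by omega
  obtain ⟨⟨A, hAm, hAc, hAw⟩, -⟩ := ht (k + 1) (by omega) (by omega)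
  obtain ⟨⟨B, hBm, hBc, hBw⟩, -⟩ := ht (k - 1) (by omega) (by omega)
  obtain ⟨-, hlbk⟩ := ht k (by omega) (by omega)
  obtain ⟨C, hCsub, hCclosed, hcount⟩ :=
    MinMatchAux.exists_good_comp (A ∪ B).card A B le_rfl hAm hBm (by omega)
  have cross : ∀ p, p ∈ A ∪ B → p ∉ C → ∀ q ∈ C, p.1 ≠ q.1 ∧ p.2 ≠ q.2 := by
    intro p hpU hpC q hq
    have hne : q ≠ p := fun h => hpC (h ▸ hq)
    constructor
    · intro h
      exact hpC (hCclosed q hq p hpU ⟨hne, Or.inl h.symm⟩)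
    · intro h
      exact hpC (hCclosed q hq p hpU ⟨hne, Or.inr h.symm⟩)
  set A' := (A \ C) ∪ (B ∩ C) with hA'
  set B' := (B \ C) ∪ (A ∩ C) with hB'
  have hA'm : Matrix.IsCellMatching A' := by
    intro p hp q hq hne
    rcases Finset.mem_union.mp hp with hp1 | hp2 <;> rcases Finset.mem_union.mp hq with hq1 | hq2
    · exact hAm p (Finset.mem_sdiff.mp hp1).1 q (Finset.mem_sdiff.mp hq1).1 hne
    · exact cross p (Finset.mem_union_left _ (Finset.mem_sdiff.mp hp1).1)
        (Finset.mem_sdiff.mp hp1).2 q (Finset.mem_inter.mp hq2).2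
    · have h := cross q (Finset.mem_union_left _ (Finset.mem_sdiff.mp hq1).1)
        (Finset.mem_sdiff.mp hq1).2 p (Finset.mem_inter.mp hp2).2
      exact ⟨h.1.symm, h.2.symm⟩
    · exact hBm p (Finset.mem_inter.mp hp2).1 q (Finset.mem_inter.mp hq2).1 hne
  have hB'm : Matrix.IsCellMatching B' := by
    intro p hp q hq hne
    rcases Finset.mem_union.mp hp with hp1 | hp2 <;> rcases Finset.mem_union.mp hq with hq1 | hq2
    · exact hBm p (Finset.mem_sdiff.mp hp1).1 q (Finset.mem_sdiff.mp hq1).1 hne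
    · exact cross p (Finset.mem_union_right _ (Finset.mem_sdiff.mp hp1).1)
        (Finset.mem_sdiff.mp hp1).2 q (Finset.mem_inter.mp hq2).2
    · have h := cross q (Finset.mem_union_right _ (Finset.mem_sdiff.mp hq1).1)
        (Finset.mem_sdiff.mp hq1).2 p (Finset.mem_inter.mp hp2).2
      exact ⟨h.1.symm, h.2.symm⟩
    · exact hAm p (Finset.mem_inter.mp hp2).1 q (Finset.mem_inter.mp hq2).1 hne
  have hdA : Disjoint (A \ C) (B ∩ C) := by
    rw [Finset.disjoint_left]
    intro p h1 h2
    exact (Finset.mem_sdiff.mp h1).2 (Finset.mem_inter.mp h2).2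
  have hdB : Disjoint (B \ C) (A ∩ C) := by
    rw [Finset.disjoint_left]
    intro p h1 h2
    exact (Finset.mem_sdiff.mp h1).2 (Finset.mem_inter.mp h2).2
  have hcardA1 : (A \ C).card + (A ∩ C).card = A.card := Finset.card_sdiff_add_card_inter A C
  have hcardB1 : (B \ C).card + (B ∩ C).card = B.card := Finset.card_sdiff_add_card_inter B C
  have hA'c : A'.card = k := by
    rw [hA', Finset.card_union_of_disjoint hdA]
    omega
  have hB'c : B'.card = k := by
    rw [hB', Finset.card_union_of_disjoint hdB]
    omega
  have hsumA : Matrix.cellWeight M (A ∩ C) + Matrix.cellWeight M (A \ C)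
      = Matrix.cellWeight M A := Finset.sum_inter_add_sum_sdiff A C _
  have hsumB : Matrix.cellWeight M (B ∩ C) + Matrix.cellWeight M (B \ C)
      = Matrix.cellWeight M B := Finset.sum_inter_add_sum_sdiff B C _
  have hwA' : Matrix.cellWeight M A'
      = Matrix.cellWeight M (A \ C) + Matrix.cellWeight M (B ∩ C) := Finset.sum_union hdA
  have hwB' : Matrix.cellWeight M B'
      = Matrix.cellWeight M (B \ C) + Matrix.cellWeight M (A ∩ C) := Finset.sum_union hdB
  have h1 : t k ≤ Matrix.cellWeight M A' := hlbk ⟨A', hA'm, hA'c, rfl⟩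
  have h2 : t k ≤ Matrix.cellWeight M B' := hlbk ⟨B', hB'm, hB'c, rfl⟩
  linarith
end

section
/- With the same random variables Δ_i^k as above and μ_i^k = E[Δ_i^k], we have lim_{n→∞} n² · Σ_{k=1}^{n} Σ_{i=1}^{k} (n-k+1)^4 · E[(Δ_i^k − μ_i^k)^4] = 0. -/
open MeasureTheory ProbabilityTheory Filter Finset


section AuxHelpers
open Real Set Nat
open scoped ENNReal NNReal



lemma integrableOn_pow_mul_exp (n : ℕ) {r : ℝ} (hr : 0 < r) :
    IntegrableOn (fun x : ℝ => x ^ n * Real.exp (-(r * x))) (Ioi 0) := by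
  have h0 : IntegrableOn (fun x : ℝ => Real.exp (-x) * x ^ ((n + 1 : ℝ) - 1)) (Ioi 0) :=
    Real.GammaIntegral_convergent (by positivity)
  have h1 : IntegrableOn (fun x : ℝ => Real.exp (-(r * x)) * (r * x) ^ ((n + 1 : ℝ) - 1))
      (Ioi 0) := by
    have := (integrableOn_Ioi_comp_mul_left_iff
      (fun x : ℝ => Real.exp (-x) * x ^ ((n + 1 : ℝ) - 1)) 0 hr).2 (by simpa using h0)
    simpa using this
  have h2 : IntegrableOn (fun x : ℝ => r ^ n * (x ^ n * Real.exp (-(r * x)))) (Ioi 0) := by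
    apply IntegrableOn.congr_fun h1 ?_ measurableSet_Ioi
    intro x hx
    rw [Set.mem_Ioi] at hx
    show Real.exp (-(r * x)) * (r * x) ^ ((n : ℝ) + 1 - 1) = _
    rw [add_sub_cancel_right, Real.mul_rpow hr.le hx.le, Real.rpow_natCast, Real.rpow_natCast]
    ring
  have h3 := h2.const_mul (r ^ n)⁻¹
  refine IntegrableOn.congr_fun h3 (fun x _ => ?_) measurableSet_Ioi
  show (r ^ n)⁻¹ * (r ^ n * (x ^ n * Real.exp (-(r * x)))) = _
  field_simp

lemma integral_pow_mul_exp (n : ℕ) {r : ℝ} (hr : 0 < r) :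
    ∫ x in Ioi 0, x ^ n * Real.exp (-(r * x)) = (n ! : ℝ) / r ^ (n + 1) := by
  have h := integral_rpow_mul_exp_neg_mul_Ioi (a := (n : ℝ) + 1) (r := r) (by positivity) hr
  rw [add_sub_cancel_right] at h
  rw [Real.Gamma_nat_eq_factorial] at h
  simp_rw [Real.rpow_natCast] at h
  rw [show ((n:ℝ)+1) = ((n+1:ℕ):ℝ) by push_cast; ring, Real.rpow_natCast] at h
  rw [h, div_pow, one_pow]
  field_simp



lemma exponentialPDFReal_def (r x : ℝ) :
    exponentialPDFReal r x = if 0 ≤ x then r * Real.exp (-(r * x)) else 0 := by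
  rw [exponentialPDFReal, gammaPDFReal]
  simp [Real.Gamma_one]

lemma expMeasure_eq (r : ℝ) : expMeasure r
    = volume.withDensity (fun x => ((exponentialPDFReal r x).toNNReal : ℝ≥0∞)) := by
  rw [expMeasure, gammaMeasure]
  congr 1

lemma pdf_smul_eq_indicator {r : ℝ} (hr : 0 < r) (g : ℝ → ℝ) (x : ℝ) :
    (exponentialPDFReal r x).toNNReal • g x
      = (Ici (0:ℝ)).indicator (fun x => (r * Real.exp (-(r * x))) * g x) x := by
  rcases le_or_gt 0 x with hx | hx
  · rw [Set.indicator_of_mem (Set.mem_Ici.mpr hx), NNReal.smul_def, smul_eq_mul,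
      Real.coe_toNNReal _ (by rw [exponentialPDFReal_def, if_pos hx]; positivity), exponentialPDFReal_def,
      if_pos hx]
  · rw [Set.indicator_of_notMem (by simpa using hx), exponentialPDFReal_def, if_neg (by linarith)]
    simp

lemma integral_expMeasure {r : ℝ} (hr : 0 < r) (g : ℝ → ℝ) :
    ∫ x, g x ∂(expMeasure r) = ∫ x in Ioi 0, (r * Real.exp (-(r * x))) * g x := by
  rw [expMeasure_eq, integral_withDensity_eq_integral_smul (by measurability) g]
  simp_rw [pdf_smul_eq_indicator hr g]
  rw [integral_indicator measurableSet_Ici, integral_Ici_eq_integral_Ioi]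

lemma integrable_expMeasure {r : ℝ} (hr : 0 < r) (g : ℝ → ℝ)
    (hg : IntegrableOn (fun x => (r * Real.exp (-(r * x))) * g x) (Ioi 0)) :
    Integrable g (expMeasure r) := by
  rw [expMeasure_eq, integrable_withDensity_iff_integrable_smul (by measurability)]
  simp_rw [pdf_smul_eq_indicator hr g]
  rw [integrable_indicator_iff measurableSet_Ici]
  exact hg.congr_set_ae Ioi_ae_eq_Ici.symm

lemma exp_mean {r : ℝ} (hr : 0 < r) : ∫ x, x ∂(expMeasure r) = 1 / r := by
  rw [integral_expMeasure hr]
  have : ∀ x : ℝ, (r * Real.exp (-(r * x))) * x = r * (x ^ 1 * Real.exp (-(r * x))) :=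
    fun x => by ring
  rw [setIntegral_congr_fun measurableSet_Ioi (fun x _ => this x), integral_const_mul,
    integral_pow_mul_exp 1 hr]
  norm_num [Nat.factorial]
  field_simp

lemma exp_integrable_id {r : ℝ} (hr : 0 < r) : Integrable (fun x : ℝ => x) (expMeasure r) := by
  apply integrable_expMeasure hr
  have := ((integrableOn_pow_mul_exp 1 hr).const_mul r)
  refine IntegrableOn.congr_fun this (fun x _ => ?_) measurableSet_Ioi
  show r * (x ^ 1 * Real.exp (-(r * x))) = _
  ring

lemma exp_integrable_cm4 {r : ℝ} (hr : 0 < r) (c : ℝ) :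
    Integrable (fun x : ℝ => (x - c) ^ 4) (expMeasure r) := by
  apply integrable_expMeasure hr
  have i4 := (integrableOn_pow_mul_exp 4 hr).const_mul r
  have i3 := (integrableOn_pow_mul_exp 3 hr).const_mul (-4 * c * r)
  have i2 := (integrableOn_pow_mul_exp 2 hr).const_mul (6 * c ^ 2 * r)
  have i1 := (integrableOn_pow_mul_exp 1 hr).const_mul (-4 * c ^ 3 * r)
  have i0 := (integrableOn_pow_mul_exp 0 hr).const_mul (c ^ 4 * r)
  have := (((i4.add i3).add i2).add i1).add i0
  refine IntegrableOn.congr_fun this (fun x _ => ?_) measurableSet_Ioi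
  show r * (x ^ 4 * Real.exp (-(r * x))) + -4 * c * r * (x ^ 3 * Real.exp (-(r * x)))
      + 6 * c ^ 2 * r * (x ^ 2 * Real.exp (-(r * x))) + -4 * c ^ 3 * r * (x ^ 1 * Real.exp (-(r * x)))
      + c ^ 4 * r * (x ^ 0 * Real.exp (-(r * x))) = _
  ring

lemma exp_cmoment4 {r : ℝ} (hr : 0 < r) (c : ℝ) :
    ∫ x, (x - c) ^ 4 ∂(expMeasure r)
      = (24 - 24 * (r * c) + 12 * (r * c) ^ 2 - 4 * (r * c) ^ 3 + (r * c) ^ 4) / r ^ 4 := by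
  rw [integral_expMeasure hr]
  have i4 := (integrableOn_pow_mul_exp 4 hr).const_mul r
  have i3 := (integrableOn_pow_mul_exp 3 hr).const_mul (-4 * c * r)
  have i2 := (integrableOn_pow_mul_exp 2 hr).const_mul (6 * c ^ 2 * r)
  have i1 := (integrableOn_pow_mul_exp 1 hr).const_mul (-4 * c ^ 3 * r)
  have i0 := (integrableOn_pow_mul_exp 0 hr).const_mul (c ^ 4 * r)
  have e : ∀ x ∈ Ioi (0:ℝ), (r * Real.exp (-(r * x))) * (x - c) ^ 4
      = r * (x ^ 4 * Real.exp (-(r * x))) + -4 * c * r * (x ^ 3 * Real.exp (-(r * x)))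
      + 6 * c ^ 2 * r * (x ^ 2 * Real.exp (-(r * x)))
      + -4 * c ^ 3 * r * (x ^ 1 * Real.exp (-(r * x)))
      + c ^ 4 * r * (x ^ 0 * Real.exp (-(r * x))) := fun x _ => by ring
  have i43 : IntegrableOn (fun x : ℝ => r * (x ^ 4 * Real.exp (-(r * x)))
      + -4 * c * r * (x ^ 3 * Real.exp (-(r * x)))) (Ioi 0) := i4.add i3
  have i432 : IntegrableOn (fun x : ℝ => r * (x ^ 4 * Real.exp (-(r * x)))
      + -4 * c * r * (x ^ 3 * Real.exp (-(r * x)))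
      + 6 * c ^ 2 * r * (x ^ 2 * Real.exp (-(r * x)))) (Ioi 0) := i43.add i2
  have i4321 : IntegrableOn (fun x : ℝ => r * (x ^ 4 * Real.exp (-(r * x)))
      + -4 * c * r * (x ^ 3 * Real.exp (-(r * x)))
      + 6 * c ^ 2 * r * (x ^ 2 * Real.exp (-(r * x)))
      + -4 * c ^ 3 * r * (x ^ 1 * Real.exp (-(r * x)))) (Ioi 0) := i432.add i1
  rw [setIntegral_congr_fun measurableSet_Ioi e, integral_add i4321 i0,
    integral_add i432 i1, integral_add i43 i2, integral_add i4 i3]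
  simp_rw [integral_const_mul, integral_pow_mul_exp _ hr]
  simp [Nat.factorial]
  field_simp
  ring


lemma integrable_dirac' {g : ℝ → ℝ} (hmg : Measurable g) (a : ℝ) :
    Integrable g (Measure.dirac a) := by
  refine ⟨hmg.aestronglyMeasurable, ?_⟩
  simp only [HasFiniteIntegral, lintegral_dirac]
  exact ENNReal.coe_lt_top

lemma mix_integral {p q r : ℝ} (hp : 0 ≤ p) (hq : 0 ≤ q) (hr : 0 < r) (g : ℝ → ℝ)
    (hmg : Measurable g) (hg : Integrable g (expMeasure r)) :
    ∫ x, g x ∂(ENNReal.ofReal p • Measure.dirac (0:ℝ) + ENNReal.ofReal q • expMeasure r)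
      = p * g 0 + q * ∫ x, g x ∂(expMeasure r) := by
  have hd : Integrable g ((ENNReal.ofReal p • Measure.dirac (0:ℝ))) :=
    (integrable_dirac' hmg 0).smul_measure ENNReal.ofReal_ne_top
  have he : Integrable g (ENNReal.ofReal q • expMeasure r) :=
    hg.smul_measure ENNReal.ofReal_ne_top
  rw [integral_add_measure hd he, integral_smul_measure, integral_smul_measure,
    integral_dirac, ENNReal.toReal_ofReal hp, ENNReal.toReal_ofReal hq]
  simp [smul_eq_mul]

lemma term_one {Ω : Type*} [MeasurableSpace Ω] (μ : Measure Ω) [IsProbabilityMeasure μ]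
    (X : Ω → ℝ) (hX : Measurable X) {r : ℝ} (hr : 0 < r)
    (hmap : Measure.map X μ = expMeasure r) :
    ∫ ω, (X ω - ∫ ω', X ω' ∂μ) ^ 4 ∂μ = 9 / r ^ 4 := by
  have hc : ∫ ω', X ω' ∂μ = 1 / r := by
    have := integral_map (μ := μ) (f := fun x : ℝ => x) hX.aemeasurable
      continuous_id.aestronglyMeasurable
    rw [hmap, exp_mean hr] at this
    exact this.symm
  set c := ∫ ω', X ω' ∂μ with hcdef
  have h4 : ∫ ω, (X ω - c) ^ 4 ∂μ = ∫ x, (x - c) ^ 4 ∂(expMeasure r) := by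
    rw [← hmap]
    exact (integral_map hX.aemeasurable
      (((continuous_sub_right c).pow 4).aestronglyMeasurable)).symm
  rw [h4, exp_cmoment4 hr c, hc]
  rw [mul_one_div, div_self hr.ne']
  norm_num

lemma term_mix {Ω : Type*} [MeasurableSpace Ω] (μ : Measure Ω) [IsProbabilityMeasure μ]
    (X : Ω → ℝ) (hX : Measurable X) {p q r : ℝ} (hp : 0 ≤ p) (hp1 : p ≤ 1)
    (hq : 0 < q) (hq1 : q ≤ 1) (hr : 0 < r)
    (hmap : Measure.map X μ
      = ENNReal.ofReal p • Measure.dirac (0:ℝ) + ENNReal.ofReal q • expMeasure r) :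
    ∫ ω, (X ω - ∫ ω', X ω' ∂μ) ^ 4 ∂μ ≤ 38 * q / r ^ 4 := by
  have hc : ∫ ω', X ω' ∂μ = q / r := by
    have h1 := integral_map (μ := μ) (f := fun x : ℝ => x) hX.aemeasurable
      continuous_id.aestronglyMeasurable
    rw [hmap] at h1
    have h2 := mix_integral hp hq.le hr (fun x : ℝ => x) measurable_id (exp_integrable_id hr)
    rw [exp_mean hr] at h2
    rw [← h1, h2]
    ring
  set c := ∫ ω', X ω' ∂μ with hcdef
  have h4 : ∫ ω, (X ω - c) ^ 4 ∂μ
      = p * (0 - c) ^ 4 + q * ((24 - 24 * (r * c) + 12 * (r * c) ^ 2 - 4 * (r * c) ^ 3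
          + (r * c) ^ 4) / r ^ 4) := by
    have h1 := integral_map (μ := μ) hX.aemeasurable
      (((continuous_sub_right c).pow 4).aestronglyMeasurable)
    rw [hmap] at h1
    have h2 := mix_integral hp hq.le hr (fun x : ℝ => (x - c) ^ 4)
      ((measurable_id.sub_const c).pow_const 4) (exp_integrable_cm4 hr c)
    rw [exp_cmoment4 hr c] at h2
    simp only [Pi.pow_apply] at h1
    rw [← h1, h2]
  have hrc : r * c = q := by rw [hc]; field_simp
  rw [h4, hrc, hc]
  have h0c : (0 - q / r) ^ 4 = q ^ 4 / r ^ 4 := by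
    rw [zero_sub, ← neg_div, div_pow]
    congr 1
    ring
  have hr4 : (0:ℝ) < r ^ 4 := by positivity
  have e2 : q ^ 2 ≤ q := by nlinarith
  have e3 : q ^ 3 ≤ q := by nlinarith
  have e4 : q ^ 4 ≤ q := by nlinarith
  have e5 : q ^ 5 ≤ q := by nlinarith
  have e6 : p * q ^ 4 ≤ q := by nlinarith
  have key : p * q ^ 4 + q * (24 - 24 * q + 12 * q ^ 2 - 4 * q ^ 3 + q ^ 4) ≤ 38 * q := by
    nlinarith
  calc p * (0 - q / r) ^ 4 + q * ((24 - 24 * q + 12 * q ^ 2 - 4 * q ^ 3 + q ^ 4) / r ^ 4)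
      = (p * q ^ 4 + q * (24 - 24 * q + 12 * q ^ 2 - 4 * q ^ 3 + q ^ 4)) / r ^ 4 := by
        rw [h0c]; ring
    _ ≤ 38 * q / r ^ 4 := by gcongr

end AuxHelpers

/-- The law of the mixture variable `Δ_i^k` for `2 ≤ i ≤ k ≤ n`: `0` with probability
`(n-i+1)/(n-i+2)` and exponential with rate `(n-i+1)(n-k+i)` with probability `1/(n-i+2)`. -/
noncomputable def deltaMixtureLaw (n k i : ℕ) : Measure ℝ :=
  ENNReal.ofReal (((n : ℝ) - i + 1) / ((n : ℝ) - i + 2)) • Measure.dirac (0 : ℝ) +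
    ENNReal.ofReal (1 / ((n : ℝ) - i + 2)) •
      expMeasure ((((n : ℝ) - i + 1)) * (((n : ℝ) - k + i)))

/-- with the same independent variables `Δ n k i` as before and
`μ_i^k = E[Δ_i^k]`, the scaled sum of fourth central moments
`n² ∑_{k=1}^n ∑_{i=1}^k (n-k+1)⁴ E[(Δ_i^k − μ_i^k)⁴]` tends to `0`. -/
theorem limit_fourth_moment_sum_eq_zero
    {Ω : Type*} [MeasurableSpace Ω] (μ : Measure Ω) [IsProbabilityMeasure μ]
    (Δ : ℕ → ℕ → ℕ → Ω → ℝ)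
    (hmeas : ∀ n k i, Measurable (Δ n k i))
    (hindep : ∀ n : ℕ, iIndepFun
      (fun p : {p : ℕ × ℕ // 1 ≤ p.2 ∧ p.2 ≤ p.1 ∧ p.1 ≤ n} => Δ n p.1.1 p.1.2) μ)
    (hlaw1 : ∀ n k : ℕ, 1 ≤ k → k ≤ n →
      Measure.map (Δ n k 1) μ = expMeasure ((n : ℝ) * ((n : ℝ) - k + 1)))
    (hlaw2 : ∀ n k i : ℕ, 2 ≤ i → i ≤ k → k ≤ n →
      Measure.map (Δ n k i) μ = deltaMixtureLaw n k i) :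
    Tendsto (fun n : ℕ => (n : ℝ) ^ 2 *
        ∑ k ∈ Icc 1 n, ∑ i ∈ Icc 1 k, ((n : ℝ) - k + 1) ^ 4 *
          ∫ ω, (Δ n k i ω - ∫ ω', Δ n k i ω' ∂μ) ^ 4 ∂μ)
      atTop (nhds 0) := by
  set F := fun n : ℕ => (n : ℝ) ^ 2 *
      ∑ k ∈ Finset.Icc 1 n, ∑ i ∈ Finset.Icc 1 k, ((n : ℝ) - k + 1) ^ 4 *
        ∫ ω, (Δ n k i ω - ∫ ω', Δ n k i ω' ∂μ) ^ 4 ∂μ with hF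
  have h0 : ∀ n : ℕ, 0 ≤ F n := by
    intro n
    apply mul_nonneg (by positivity)
    refine Finset.sum_nonneg fun k _ => Finset.sum_nonneg fun i _ => ?_
    refine mul_nonneg (by positivity) (integral_nonneg fun ω => by positivity)
  have hub : ∀ n : ℕ, 1 ≤ n → F n ≤ 47 / n := by
    intro n hn
    have hN : (1:ℝ) ≤ (n:ℝ) := by exact_mod_cast hn
    have hN0 : (0:ℝ) < n := by linarith
    set N : ℝ := (n:ℝ) with hNdef
    have hN0 : (0:ℝ) < n := hN0
    set bnd : ℕ → ℝ := fun i => if i = 1 then 9 / N ^ 4 else 38 / ((N - i + 2) * N ^ 4)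
      with hbnd
    have hstep1 : ∀ k ∈ Finset.Icc 1 n, ∀ i ∈ Finset.Icc 1 k,
        ((n : ℝ) - k + 1) ^ 4 * ∫ ω, (Δ n k i ω - ∫ ω', Δ n k i ω' ∂μ) ^ 4 ∂μ ≤ bnd i := by
      intro k hk i hi
      rw [Finset.mem_Icc] at hk hi
      obtain ⟨hk1, hkn⟩ := hk
      obtain ⟨hi1, hik⟩ := hi
      have hkR : (k:ℝ) ≤ N := by rw [hNdef]; exact_mod_cast hkn
      have hk1R : (1:ℝ) ≤ (k:ℝ) := by exact_mod_cast hk1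
      have hA : (0:ℝ) < N - k + 1 := by linarith
      rcases eq_or_lt_of_le hi1 with h1 | h2
      · -- i = 1
        have hi1' : i = 1 := h1.symm
        subst hi1'
        have hr : (0:ℝ) < N * (N - k + 1) := by positivity
        rw [term_one μ _ (hmeas n k 1) hr (hlaw1 n k hk1 hkn), hbnd]
        simp only [if_pos rfl]
        have e : (N - k + 1) ^ 4 * (9 / (N * (N - k + 1)) ^ 4) = 9 / N ^ 4 := by
          rw [mul_pow]
          field_simp
        exact le_of_eq e
      · -- 2 ≤ i
        have h2i : 2 ≤ i := h2
        have hiR : (2:ℝ) ≤ (i:ℝ) := by exact_mod_cast h2i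
        have hikR : (i:ℝ) ≤ (k:ℝ) := by exact_mod_cast hik
        have hB : (0:ℝ) < N - i + 1 := by linarith
        have hD : (0:ℝ) < N - i + 2 := by linarith
        have hC : (0:ℝ) < N - k + i := by linarith
        have hr : (0:ℝ) < (N - i + 1) * (N - k + i) := by positivity
        have hp : (0:ℝ) ≤ (N - i + 1) / (N - i + 2) := by positivity
        have hp1 : (N - i + 1) / (N - i + 2) ≤ 1 := by
          rw [div_le_one hD]; linarith
        have hq : (0:ℝ) < 1 / (N - i + 2) := by positivity
        have hq1 : 1 / (N - i + 2) ≤ 1 := by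
          rw [div_le_one hD]; linarith
        have hm := hlaw2 n k i h2i hik hkn
        rw [deltaMixtureLaw] at hm
        have hle := term_mix μ _ (hmeas n k i) hp hp1 hq hq1 hr hm
        have key : N * (N - k + 1) ≤ (N - i + 1) * (N - k + i) := by nlinarith
        have key4 : N ^ 4 * (N - k + 1) ^ 4 ≤ ((N - i + 1) * (N - k + i)) ^ 4 := by
          calc N ^ 4 * (N - k + 1) ^ 4 = (N * (N - k + 1)) ^ 4 := by rw [mul_pow]
          _ ≤ ((N - i + 1) * (N - k + i)) ^ 4 :=
            pow_le_pow_left₀ (by positivity) key 4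
        have hbnd2 : (N - k + 1) ^ 4 * (38 * (1 / (N - i + 2)) / ((N - i + 1) * (N - k + i)) ^ 4)
            ≤ 38 / ((N - i + 2) * N ^ 4) := by
          have e : (N - k + 1) ^ 4 * (38 * (1 / (N - i + 2)) / ((N - i + 1) * (N - k + i)) ^ 4)
              = 38 * (N - k + 1) ^ 4 / ((N - i + 2) * ((N - i + 1) * (N - k + i)) ^ 4) := by
            field_simp
          rw [e, div_le_div_iff₀ (by positivity) (by positivity)]
          have h' := mul_le_mul_of_nonneg_left key4
            (by positivity : (0:ℝ) ≤ 38 * (N - i + 2))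
          calc 38 * (N - k + 1) ^ 4 * ((N - i + 2) * N ^ 4)
              = 38 * (N - i + 2) * (N ^ 4 * (N - k + 1) ^ 4) := by ring
            _ ≤ 38 * (N - i + 2) * ((N - i + 1) * (N - k + i)) ^ 4 := h'
            _ = 38 * ((N - i + 2) * ((N - i + 1) * (N - k + i)) ^ 4) := by ring
        have := le_trans (mul_le_mul_of_nonneg_left hle (by positivity :
          (0:ℝ) ≤ (N - k + 1) ^ 4)) hbnd2
        rw [hbnd]
        simp only [if_neg (by omega : ¬ i = 1)]
        exact this
    -- sum the bounds
    have hswap : ∑ k ∈ Finset.Icc 1 n, ∑ i ∈ Finset.Icc 1 k, bnd i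
        = ∑ i ∈ Finset.Icc 1 n, ∑ k ∈ Finset.Icc i n, bnd i := by
      rw [Finset.sum_sigma', Finset.sum_sigma']
      apply Finset.sum_nbij' (fun x => ⟨x.2, x.1⟩) (fun x => ⟨x.2, x.1⟩) <;>
        simp +contextual [Finset.mem_Icc] <;> omega
    have hsum2 : ∀ i ∈ Finset.Icc 1 n, ∑ k ∈ Finset.Icc i n, bnd i
        ≤ 38 / N ^ 4 + (if i = 1 then 9 / N ^ 3 else 0) := by
      intro i hi
      rw [Finset.mem_Icc] at hi
      obtain ⟨hi1, hin⟩ := hi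
      rw [Finset.sum_const, Nat.card_Icc, nsmul_eq_mul]
      have hcast : ((n + 1 - i : ℕ) : ℝ) = N + 1 - i := by
        have : i ≤ n + 1 := by omega
        push_cast [Nat.cast_sub this]
        ring
      rw [hcast]
      have hiR1 : (1:ℝ) ≤ (i:ℝ) := by exact_mod_cast hi1
      have hiRn : (i:ℝ) ≤ N := by rw [hNdef]; exact_mod_cast hin
      rcases eq_or_lt_of_le hi1 with h1 | h2
      · have hi1' : i = 1 := h1.symm
        subst hi1'
        rw [hbnd]
        norm_num
        have e : (N + 1 - 1) * (9 / N ^ 4) = 9 / N ^ 3 := by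
          field_simp
          ring
        have h38 : (0:ℝ) ≤ 38 / N ^ 4 := by positivity
        nlinarith [e]
      · have h2i : 2 ≤ i := h2
        rw [hbnd]
        simp only [if_neg (by omega : ¬ i = 1)]
        have hD : (0:ℝ) < N - i + 2 := by linarith
        have h1 : (N + 1 - i) * (38 / ((N - i + 2) * N ^ 4))
            ≤ (N - i + 2) * (38 / ((N - i + 2) * N ^ 4)) :=
          mul_le_mul_of_nonneg_right (by linarith) (by positivity)
        have h2' : (N - i + 2) * (38 / ((N - i + 2) * N ^ 4)) = 38 / N ^ 4 := by
          field_simp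
        have h3 : (0:ℝ) ≤ (if i = 1 then 9 / N ^ 3 else (0:ℝ)) := by positivity
        rw [h2'] at h1
        linarith
    have hsum3 : ∑ i ∈ Finset.Icc 1 n, (38 / N ^ 4 + (if i = 1 then 9 / N ^ 3 else 0))
        = n * (38 / N ^ 4) + 9 / N ^ 3 := by
      rw [Finset.sum_add_distrib, Finset.sum_const, Nat.card_Icc, nsmul_eq_mul,
        Finset.sum_ite_eq' (Finset.Icc 1 n) 1 (fun _ => 9 / N ^ 3),
        if_pos (Finset.mem_Icc.mpr ⟨le_refl 1, hn⟩)]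
      norm_num
    have hS : ∑ k ∈ Finset.Icc 1 n, ∑ i ∈ Finset.Icc 1 k, ((n : ℝ) - k + 1) ^ 4 *
          ∫ ω, (Δ n k i ω - ∫ ω', Δ n k i ω' ∂μ) ^ 4 ∂μ ≤ 47 / N ^ 3 := by
      calc ∑ k ∈ Finset.Icc 1 n, ∑ i ∈ Finset.Icc 1 k, ((n : ℝ) - k + 1) ^ 4 *
            ∫ ω, (Δ n k i ω - ∫ ω', Δ n k i ω' ∂μ) ^ 4 ∂μ
          ≤ ∑ k ∈ Finset.Icc 1 n, ∑ i ∈ Finset.Icc 1 k, bnd i := by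
            refine Finset.sum_le_sum fun k hk => Finset.sum_le_sum fun i hi => ?_
            exact hstep1 k hk i hi
        _ = ∑ i ∈ Finset.Icc 1 n, ∑ k ∈ Finset.Icc i n, bnd i := hswap
        _ ≤ ∑ i ∈ Finset.Icc 1 n, (38 / N ^ 4 + (if i = 1 then 9 / N ^ 3 else 0)) :=
            Finset.sum_le_sum hsum2
        _ = n * (38 / N ^ 4) + 9 / N ^ 3 := hsum3
        _ = 47 / N ^ 3 := by
            rw [hNdef]
            field_simp
            ring
    have : F n ≤ N ^ 2 * (47 / N ^ 3) := by
      rw [hF]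
      exact mul_le_mul_of_nonneg_left hS (by positivity)
    calc F n ≤ N ^ 2 * (47 / N ^ 3) := this
      _ = 47 / N := by
          field_simp
  refine squeeze_zero' (Eventually.of_forall h0) ?_
    (tendsto_const_div_atTop_nhds_zero_nat 47)
  filter_upwards [eventually_ge_atTop 1] with n hn using hub n hn
end

section
/- With r_i^k defined by the stated recursion from the independent Δ_i^k, the increments satisfy: r_{i+1}^k − r_i^k is distributed as Exponential with rate (n-i+1)(n-k+i-1) for 1 ≤ i ≤ k, and the collection {r_2^k − r_1^k, …, r_{k+1}^k − r_k^k, r_1^{k+1} − r_{k+1}^k} consists of independent random variables. -/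
open MeasureTheory ProbabilityTheory Finset

section AuxLemmas
open Real
open scoped ENNReal

lemma expMeasure_apply {r : ℝ} {s : Set ℝ} (hs : MeasurableSet s) :
    expMeasure r s = ∫⁻ x in s, exponentialPDF r x := by
  rw [expMeasure, gammaMeasure, withDensity_apply _ hs]
  rfl

lemma expMeasure_apply_Iic {r : ℝ} (hr : 0 < r) (t : ℝ) :
    expMeasure r (Set.Iic t) = ENNReal.ofReal (if 0 ≤ t then 1 - rexp (-(r * t)) else 0) := by
  rw [expMeasure_apply measurableSet_Iic, lintegral_exponentialPDF_eq_antiDeriv hr]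

-- the key real integral
lemma key_integral {a c t : ℝ} (hc : 0 < c) (hca : c < a) (ht : 0 ≤ t) :
    ∫ z in Set.Icc 0 t, c * rexp (-(c*z)) * (1 - rexp (-(a*(t-z))))
      = 1 - (a/(a-c)) * rexp (-(c*t)) + (c/(a-c)) * rexp (-(a*t)) := by
  have ha : 0 < a := hc.trans hca
  have hac : a - c ≠ 0 := by linarith
  have hcont : Continuous fun z : ℝ => c * rexp (-(c*z)) * (1 - rexp (-(a*(t-z)))) := by
    fun_prop
  rw [integral_Icc_eq_integral_Ioc, ← intervalIntegral.integral_of_le ht]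
  have hderiv : ∀ z ∈ Set.uIcc (0:ℝ) t, HasDerivAt
      (fun z : ℝ => -rexp (-(c*z)) - (c/(a-c)) * rexp ((a-c)*z - a*t))
      (c * rexp (-(c*z)) * (1 - rexp (-(a*(t-z))))) z := by
    intro z _
    have d1 : HasDerivAt (fun z : ℝ => rexp (-(c*z))) (rexp (-(c*z)) * (-c)) z := by
      have := ((hasDerivAt_id z).const_mul (-c)).exp
      simpa [neg_mul, mul_comm] using this
    have d2 : HasDerivAt (fun z : ℝ => rexp ((a-c)*z - a*t))
        (rexp ((a-c)*z - a*t) * (a-c)) z := by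
      have := (((hasDerivAt_id z).const_mul (a-c)).sub_const (a*t)).exp
      simpa [mul_comm] using this
    have := (d1.neg).sub ((d2.const_mul (c/(a-c))))
    refine this.congr_deriv ?_
    have he : rexp (-(c*z)) * rexp (-(a*(t-z))) = rexp ((a-c)*z - a*t) := by
      rw [← Real.exp_add]; ring_nf
    have h4 : c/(a-c) * (rexp ((a-c)*z - a*t) * (a-c)) = c * rexp ((a-c)*z - a*t) := by
      field_simp
    rw [h4]
    linear_combination c * he
  rw [intervalIntegral.integral_eq_sub_of_hasDerivAt hderiv (hcont.intervalIntegrable 0 t)]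
  have h1 : (a-c)*t - a*t = -(c*t) := by ring
  have h2 : (a-c)*0 - a*t = -(a*t) := by ring
  rw [h1, h2]
  field_simp
  simp only [mul_zero, neg_zero, Real.exp_zero]
  ring

lemma exp_add_mixture_law {Ω : Type*} [MeasurableSpace Ω] (μ : Measure Ω) [IsProbabilityMeasure μ]
    {X Z : Ω → ℝ} (hX : Measurable X) (hZ : Measurable Z) (hXZ : IndepFun X Z μ)
    {a c : ℝ} (hc : 0 < c) (hca : c < a)
    (hXlaw : Measure.map X μ = expMeasure a)
    (hZlaw : Measure.map Z μ = ENNReal.ofReal (c / a) • Measure.dirac 0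
      + ENNReal.ofReal (1 - c / a) • expMeasure c) :
    Measure.map (fun ω => X ω + Z ω) μ = expMeasure c := by
  have ha : 0 < a := hc.trans hca
  have hac : a - c ≠ 0 := by linarith
  have hEc : IsProbabilityMeasure (expMeasure c) := isProbabilityMeasure_expMeasure hc
  have hpair : Measure.map (fun ω => (Z ω, X ω)) μ = (Measure.map Z μ).prod (Measure.map X μ) :=
    (indepFun_iff_map_prod_eq_prod_map_map hZ.aemeasurable hX.aemeasurable).mp hXZ.symm
  have hmap : Measure.map (fun ω => X ω + Z ω) μ
      = Measure.map (fun p : ℝ × ℝ => p.1 + p.2) ((Measure.map Z μ).prod (Measure.map X μ)) := by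
    rw [← hpair, Measure.map_map (by fun_prop) (by fun_prop)]
    simp only [Function.comp_def]
    congr 1
    ext ω
    ring
  have hfin : IsFiniteMeasure (Measure.map (fun ω => X ω + Z ω) μ) := by
    constructor
    rw [hmap]
    exact (Measure.map_apply (by fun_prop) MeasurableSet.univ).trans_lt
      (by simp [measure_lt_top])
  refine Measure.ext_of_Iic _ _ (fun t => ?_)
  rw [hmap, Measure.map_apply (by fun_prop) measurableSet_Iic]
  have hsetm : MeasurableSet ((fun p : ℝ × ℝ => p.1 + p.2) ⁻¹' Set.Iic t) :=
    (measurable_fst.add measurable_snd) measurableSet_Iic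
  rw [Measure.prod_apply hsetm]
  have hslice : ∀ z : ℝ, (Prod.mk z ⁻¹' ((fun p : ℝ × ℝ => p.1 + p.2) ⁻¹' Set.Iic t))
      = Set.Iic (t - z) := by
    intro z; ext x
    simp only [Set.mem_preimage, Set.mem_Iic]
    constructor <;> intro h <;> linarith
  simp_rw [hslice, hXlaw]
  set f : ℝ → ℝ≥0∞ :=
    fun z => ENNReal.ofReal (if 0 ≤ t - z then 1 - rexp (-(a * (t - z))) else 0) with hf_def
  have hint_eq : (fun z => expMeasure a (Set.Iic (t - z))) = f := by
    funext z; rw [expMeasure_apply_Iic ha]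
  rw [hint_eq, hZlaw]
  have hfmeas : Measurable f := by
    apply Measurable.ennreal_ofReal
    apply Measurable.ite ?_ (by fun_prop) (by fun_prop)
    exact measurableSet_le measurable_const (by fun_prop)
  rw [lintegral_add_measure, lintegral_smul_measure, lintegral_smul_measure,
    lintegral_dirac' _ hfmeas]
  simp only [smul_eq_mul]
  rw [expMeasure_apply_Iic hc]
  have hpdfm : Measurable (exponentialPDF c) := (measurable_exponentialPDFReal c).ennreal_ofReal
  by_cases ht : 0 ≤ t
  · -- main case
    have hf0 : f 0 = ENNReal.ofReal (1 - rexp (-(a * t))) := by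
      simp only [hf_def, sub_zero, if_pos ht]
    rw [hf0, if_pos ht]
    have hwd : expMeasure c = volume.withDensity (exponentialPDF c) := rfl
    have hlint : ∫⁻ z, f z ∂(expMeasure c) = ∫⁻ z, exponentialPDF c z * f z := by
      rw [hwd, lintegral_withDensity_eq_lintegral_mul _ hpdfm hfmeas]
      rfl
    rw [hlint]
    have h1 : ∫⁻ z in Set.Iio 0, exponentialPDF c z * f z = ∫⁻ _ in Set.Iio (0:ℝ), 0 :=
      setLIntegral_congr_fun measurableSet_Iio
        (by intro z (hz : z < 0); show exponentialPDF c z * f z = 0; rw [exponentialPDF_of_neg hz, zero_mul])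
    have h2 : ∫⁻ z in (Set.Iic t)ᶜ, exponentialPDF c z * f z = ∫⁻ _ in (Set.Iic t)ᶜ, 0 :=
      setLIntegral_congr_fun (measurableSet_Iic (a := t)).compl
        (by
          intro z hz
          have hzt : ¬ (0 ≤ t - z) := by
            simp only [Set.mem_compl_iff, Set.mem_Iic, not_le] at hz
            linarith
          simp only [hf_def, if_neg hzt, ENNReal.ofReal_zero, mul_zero])
    have hsplit : ∫⁻ z, exponentialPDF c z * f z
        = ∫⁻ z in Set.Icc 0 t, exponentialPDF c z * f z := by
      rw [← lintegral_add_compl (fun z => exponentialPDF c z * f z) (measurableSet_Iic (a := t)),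
        lintegral_Iic_eq_lintegral_Iio_add_Icc _ ht, h1, h2]
      simp
    rw [hsplit]
    have hptw : ∀ z ∈ Set.Icc (0:ℝ) t, exponentialPDF c z * f z
        = ENNReal.ofReal (c * rexp (-(c*z)) * (1 - rexp (-(a*(t-z))))) := by
      intro z hz
      obtain ⟨hz0, hzt⟩ := hz
      rw [exponentialPDF_of_nonneg hz0]
      simp only [hf_def, if_pos (by linarith : 0 ≤ t - z)]
      rw [← ENNReal.ofReal_mul (by positivity)]
    rw [setLIntegral_congr_fun measurableSet_Icc hptw]
    have hcont : Continuous fun z : ℝ => c * rexp (-(c*z)) * (1 - rexp (-(a*(t-z)))) := by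
      fun_prop
    have hintg : IntegrableOn (fun z : ℝ => c * rexp (-(c*z)) * (1 - rexp (-(a*(t-z)))))
        (Set.Icc 0 t) := hcont.integrableOn_Icc
    have hnnptw : ∀ z ∈ Set.Icc (0:ℝ) t,
        0 ≤ c * rexp (-(c*z)) * (1 - rexp (-(a*(t-z)))) := by
      intro z hz
      have h1' : 0 ≤ a * (t - z) := mul_nonneg ha.le (by linarith [hz.2])
      have h2' : rexp (-(a*(t-z))) ≤ 1 := by
        rw [Real.exp_le_one_iff]; linarith
      have : 0 ≤ 1 - rexp (-(a*(t-z))) := by linarith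
      positivity
    have hnn : 0 ≤ᵐ[volume.restrict (Set.Icc 0 t)]
        fun z : ℝ => c * rexp (-(c*z)) * (1 - rexp (-(a*(t-z)))) :=
      (ae_restrict_iff' measurableSet_Icc).2 (ae_of_all _ hnnptw)
    rw [← ofReal_integral_eq_lintegral_ofReal hintg hnn, key_integral hc hca ht]
    have hq : (0:ℝ) ≤ c/a := le_of_lt (div_pos hc ha)
    have hA : (0:ℝ) ≤ 1 - rexp (-(a*t)) := by
      have h1' : 0 ≤ a * t := mul_nonneg ha.le ht
      have : rexp (-(a*t)) ≤ 1 := by rw [Real.exp_le_one_iff]; linarith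
      linarith
    have hp : (0:ℝ) ≤ 1 - c/a := by
      rw [sub_nonneg, div_le_one ha]; linarith
    have hInn : (0:ℝ) ≤ 1 - (a/(a-c)) * rexp (-(c*t)) + (c/(a-c)) * rexp (-(a*t)) := by
      rw [← key_integral hc hca ht]
      exact setIntegral_nonneg measurableSet_Icc hnnptw
    rw [← ENNReal.ofReal_mul hq, ← ENNReal.ofReal_mul hp,
      ← ENNReal.ofReal_add (mul_nonneg hq hA) (mul_nonneg hp hInn)]
    congr 1
    field_simp
    ring
  · -- t < 0 : both sides are zero
    push_neg at ht
    rw [if_neg (not_le.mpr ht), ENNReal.ofReal_zero]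
    have hf0 : f 0 = 0 := by
      simp only [hf_def, sub_zero, if_neg (not_le.mpr ht), ENNReal.ofReal_zero]
    rw [hf0, mul_zero, zero_add]
    have hlz : ∫⁻ z, f z ∂(expMeasure c) = 0 := by
      rw [lintegral_eq_zero_iff hfmeas, Filter.EventuallyEq, ae_iff]
      have hsub : {z : ℝ | ¬ f z = (fun _ => (0:ℝ≥0∞)) z} ⊆ Set.Iio 0 := by
        intro z hz
        simp only [Set.mem_setOf_eq, hf_def] at hz
        by_contra hz0
        rw [Set.mem_Iio, not_lt] at hz0
        exact hz (by rw [if_neg (by linarith), ENNReal.ofReal_zero])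
      refine measure_mono_null hsub ?_
      rw [expMeasure_apply measurableSet_Iio, lintegral_exponentialPDF_of_nonpos le_rfl]
    rw [hlz, mul_zero]
lemma iIndepFun_groups {Ω ι J : Type*} [MeasurableSpace Ω] {μ : Measure Ω}
    [IsProbabilityMeasure μ]
    {f : ι → Ω → ℝ} (hf : ∀ i, Measurable (f i))
    (hindep : iIndepFun f μ)
    (S : J → Finset ι) (hdisj : Pairwise (Function.onFun Disjoint S))
    {g : J → Ω → ℝ}
    (hg : ∀ j, Measurable[⨆ i ∈ (S j : Set ι), MeasurableSpace.comap (f i) inferInstance] (g j)) :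
    iIndepFun g μ := by
  classical
  set m : ι → MeasurableSpace Ω := fun i => MeasurableSpace.comap (f i) inferInstance with hm
  set ps : ι → Set (Set Ω) := fun i => {s | MeasurableSet[m i] s} with hps
  set M : J → MeasurableSpace Ω := fun j => ⨆ i ∈ (S j : Set ι), m i with hM
  have hM_le : ∀ j, M j ≤ ‹MeasurableSpace Ω› := by
    intro j
    refine iSup₂_le fun i _ => ?_
    exact (hf i).comap_le
  have hMind : iIndep M μ := by
    refine iIndepSets.iIndep hM_le (fun j => piiUnionInter ps (S j))
      (fun j => isPiSystem_piiUnionInter ps (fun i => @MeasurableSpace.isPiSystem_measurableSet Ω (m i)) _)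
      (fun j => (generateFrom_piiUnionInter_measurableSet m (S j)).symm) ?_
    rw [iIndepSets_iff]
    intro s F hF
    -- choose representations
    have hrep : ∀ j, j ∈ s → ∃ (t : Finset ι), ↑t ⊆ (S j : Set ι) ∧ ∃ (u : ι → Set Ω),
        (∀ x ∈ t, MeasurableSet[m x] (u x)) ∧ F j = ⋂ x ∈ t, u x := by
      intro j hj
      obtain ⟨t, ht, u, hu, hFj⟩ := hF j hj
      exact ⟨t, ht, u, hu, hFj⟩
    choose! t ht u hu hFeq using hrep
    set U : Finset ι := s.biUnion t with hU
    -- for i in t j, the filter is {j}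
    have huniq : ∀ j ∈ s, ∀ i ∈ t j, ∀ j' ∈ s, i ∈ t j' → j' = j := by
      intro j hj i hi j' hj' hi'
      by_contra hne
      have h1 : i ∈ S j' := by exact_mod_cast (ht j' hj') (Finset.mem_coe.2 hi')
      have h2 : i ∈ S j := by exact_mod_cast (ht j hj) (Finset.mem_coe.2 hi)
      exact (Finset.disjoint_left.1 (hdisj hne) h1) h2
    set v : ι → Set Ω := fun i => ⋂ j ∈ s.filter (fun j => i ∈ t j), u j i with hv
    have hfilter : ∀ j ∈ s, ∀ i ∈ t j, s.filter (fun j' => i ∈ t j') = {j} := by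
      intro j hj i hi
      ext j'
      simp only [Finset.mem_filter, Finset.mem_singleton]
      constructor
      · rintro ⟨hj', hi'⟩; exact huniq j hj i hi j' hj' hi'
      · rintro rfl; exact ⟨hj, hi⟩
    have hveq : ∀ j ∈ s, ∀ i ∈ t j, v i = u j i := by
      intro j hj i hi
      rw [hv]
      simp only
      rw [hfilter j hj i hi]
      simp
    have hInter : (⋂ j ∈ s, F j) = ⋂ i ∈ U, v i := by
      ext ω
      simp only [Set.mem_iInter, hU, Finset.mem_biUnion]
      constructor
      · intro h i hi
        obtain ⟨j, hj, hij⟩ := hi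
        rw [hveq j hj i hij]
        have := h j hj
        rw [hFeq j hj] at this
        exact Set.mem_iInter₂.1 this i hij
      · intro h j hj
        rw [hFeq j hj]
        refine Set.mem_iInter₂.2 fun i hi => ?_
        have := h i ⟨j, hj, hi⟩
        rwa [hveq j hj i hi] at this
    have hvmeas : ∀ i ∈ U, MeasurableSet[m i] (v i) := by
      intro i hi
      obtain ⟨j, hj, hij⟩ := Finset.mem_biUnion.1 hi
      rw [hveq j hj i hij]
      exact hu j hj i hij
    have hprod : μ (⋂ i ∈ U, v i) = ∏ i ∈ U, μ (v i) :=
      hindep.meas_biInter hvmeas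
    have hdisjt : (s : Set J).Pairwise (fun j j' => Disjoint (t j) (t j')) := by
      intro j hj j' hj' hne
      exact Disjoint.mono (Finset.coe_subset.1 (by exact_mod_cast ht j hj))
        (Finset.coe_subset.1 (by exact_mod_cast ht j' hj')) (hdisj hne)
    rw [hInter, hprod, Finset.prod_biUnion hdisjt]
    refine Finset.prod_congr rfl fun j hj => ?_
    rw [hFeq j hj, hindep.meas_biInter (fun i hi => hu j hj i hi)]
    exact (Finset.prod_congr rfl fun i hi => by rw [hveq j hj i hi]).symm
  -- conclude
  rw [iIndepFun_iff_iIndep]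
  have hle : ∀ j, MeasurableSpace.comap (g j) inferInstance ≤ M j := fun j =>
    Measurable.comap_le (hg j)
  rw [iIndep_iff] at hMind ⊢
  intro s F hF
  exact hMind s (fun j hj => (hle j) _ (hF j hj))

lemma measurable_iSup_comap {Ω ι : Type*} [MeasurableSpace Ω] (f : ι → Ω → ℝ) (T : Finset ι)
    {i : ι} (hi : i ∈ T) :
    Measurable[⨆ j ∈ (T : Set ι), MeasurableSpace.comap (f j) inferInstance] (f i) := by
  have h1 : Measurable[MeasurableSpace.comap (f i) inferInstance] (f i) :=
    fun s hs => ⟨s, hs, rfl⟩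
  exact h1.mono (le_iSup₂ (f := fun j (_ : j ∈ (T : Set ι)) =>
    MeasurableSpace.comap (f j) inferInstance) i (Finset.mem_coe.2 hi)) le_rfl

end AuxLemmas

/-- with `r k i` (denoting `r_i^k`) defined by the stated recursion from the
independent variables `Δ k i` (denoting `Δ_i^k`), the increment `r_{i+1}^k − r_i^k` is
exponential with rate `(n-i+1)(n-k+i-1)` for `1 ≤ i ≤ k`, and the variables
`r_2^k − r_1^k, …, r_{k+1}^k − r_k^k, r_1^{k+1} − r_{k+1}^k` are independent. -/
theorem r_increments_law_and_independence
    {Ω : Type*} [MeasurableSpace Ω] (μ : Measure Ω) [IsProbabilityMeasure μ] (n : ℕ)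
    (Δ : ℕ → ℕ → Ω → ℝ) (r : ℕ → ℕ → Ω → ℝ)
    (hmeas : ∀ k i, Measurable (Δ k i)) (hrmeas : ∀ k i, Measurable (r k i))
    (hindep : iIndepFun
      (fun p : {p : ℕ × ℕ // 1 ≤ p.2 ∧ p.2 ≤ p.1 ∧ p.1 ≤ n} => Δ p.1.1 p.1.2) μ)
    (hlaw1 : ∀ k : ℕ, 1 ≤ k → k ≤ n →
      Measure.map (Δ k 1) μ = expMeasure ((n : ℝ) * ((n : ℝ) - k + 1)))
    (hlaw2 : ∀ k i : ℕ, 2 ≤ i → i ≤ k → k ≤ n →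
      Measure.map (Δ k i) μ = deltaMixtureLaw n k i)
    (hinit : r 1 1 = Δ 1 1)
    (hA : ∀ k, 1 ≤ k → k ≤ n - 1 → ∀ ω, r k 2 ω - r k 1 ω = Δ (k + 1) 1 ω)
    (hB : ∀ ω, r 2 1 ω - r 1 2 ω = r 1 1 ω + Δ 2 2 ω)
    (hC : ∀ k i, 2 ≤ i → i ≤ k → k ≤ n - 1 → ∀ ω,
      r k (i + 1) ω - r k i ω = r (k - 1) i ω - r (k - 1) (i - 1) ω + Δ (k + 1) i ω)
    (hD : ∀ k, 2 ≤ k → k ≤ n - 1 → ∀ ω,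
      r (k + 1) 1 ω - r k (k + 1) ω = r k 1 ω - r (k - 1) k ω + Δ (k + 1) (k + 1) ω) :
    ∀ k, 1 ≤ k → k ≤ n - 1 →
      (∀ i, 1 ≤ i → i ≤ k →
        Measure.map (fun ω => r k (i + 1) ω - r k i ω) μ =
          expMeasure ((((n : ℝ) - i + 1)) * (((n : ℝ) - k + i - 1)))) ∧
      iIndepFun
        (fun j : Fin (k + 1) => fun ω =>
          if (j : ℕ) < k then r k ((j : ℕ) + 2) ω - r k ((j : ℕ) + 1) ω
          else r (k + 1) 1 ω - r k (k + 1) ω) μ := by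
  classical
  have rep : ∀ k, 1 ≤ k → k ≤ n - 1 →
      (∀ i, 1 ≤ i → i ≤ k → ∀ ω, r k (i + 1) ω - r k i ω
          = ∑ j ∈ Finset.Icc 1 i, Δ (k - i + 1 + j) j ω) ∧
      (∀ ω, r (k + 1) 1 ω - r k (k + 1) ω
          = Δ 1 1 ω + ∑ j ∈ Finset.Icc 2 (k + 1), Δ j j ω) := by
    intro k
    induction k with
    | zero => omega
    | succ k ih =>
      intro _ hle
      by_cases hk0 : k = 0
      · subst hk0
        constructor
        · intro i hi1 hik ω
          interval_cases i
          rw [Finset.Icc_self, Finset.sum_singleton]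
          have h2 : 1 - 1 + 1 + 1 = 2 := by omega
          rw [h2]
          exact hA 1 le_rfl hle ω
        · intro ω
          rw [Finset.Icc_self, Finset.sum_singleton, ← congrFun hinit ω]
          exact hB ω
      · have hk1' : 1 ≤ k := by omega
        have hkn' : k ≤ n - 1 := by omega
        obtain ⟨ihA, ihB⟩ := ih hk1' hkn'
        constructor
        · intro i hi1 hik ω
          rcases eq_or_lt_of_le hi1 with h1 | h2
          · subst h1
            rw [Finset.Icc_self, Finset.sum_singleton]
            have h2 : k + 1 - 1 + 1 + 1 = k + 1 + 1 := by omega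
            rw [h2]
            exact hA (k+1) (by omega) hle ω
          · have hi2 : 2 ≤ i := h2
            have hCi := hC (k+1) i hi2 hik hle ω
            have hsimp : k + 1 - 1 = k := by omega
            rw [hsimp] at hCi
            have hprev := ihA (i-1) (by omega) (by omega) ω
            have hi1' : i - 1 + 1 = i := by omega
            rw [hi1'] at hprev
            rw [hCi, hprev]
            have hG : ∑ j ∈ Finset.Icc 1 i, Δ (k + 1 - i + 1 + j) j ω
                = ∑ j ∈ Finset.Icc 1 ((i-1)+1), Δ (k - (i-1) + 1 + j) j ω := by
              refine Finset.sum_congr (by rw [hi1']) (fun j hj => ?_)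
              have h : k + 1 - i + 1 + j = k - (i-1) + 1 + j := by omega
              rw [h]
            rw [hG, Finset.sum_Icc_succ_top (by omega : 1 ≤ i - 1 + 1)]
            congr 1
            have e1 : k - (i-1) + 1 + (i-1+1) = k + 1 + 1 := by omega
            rw [e1, hi1']
        · intro ω
          have hDk := hD (k+1) (by omega) hle ω
          have hsimp : k + 1 - 1 = k := by omega
          rw [hsimp] at hDk
          rw [Finset.sum_Icc_succ_top (by omega : 2 ≤ k + 1 + 1), hDk, ihB ω]
          ring
  have law : ∀ k i, 1 ≤ i → i ≤ k → k ≤ n - 1 →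
      Measure.map (fun ω => ∑ j ∈ Finset.Icc 1 i, Δ (k - i + 1 + j) j ω) μ
        = expMeasure ((((n : ℝ) - i + 1)) * (((n : ℝ) - k + i - 1))) := by
    intro k i hi1 hik hkn
    have he_meas : ∀ p : {p : ℕ × ℕ // 1 ≤ p.2 ∧ p.2 ≤ p.1 ∧ p.1 ≤ n},
        Measurable ((fun p : {p : ℕ × ℕ // 1 ≤ p.2 ∧ p.2 ≤ p.1 ∧ p.1 ≤ n} => Δ p.1.1 p.1.2) p) :=
      fun p => hmeas _ _
    have hn2 : 2 ≤ n := by omega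
    suffices h : ∀ i', 1 ≤ i' → i' ≤ i →
        Measure.map (fun ω => ∑ j ∈ Finset.Icc 1 i', Δ (k - i + 1 + j) j ω) μ
          = expMeasure ((((n : ℝ) - i' + 1)) * (((n : ℝ) - k + i - 1))) from h i hi1 le_rfl
    intro i'
    induction i' with
    | zero => omega
    | succ m ihm =>
      intro _ hmi
      by_cases hm0 : m = 0
      · subst hm0
        have hfun : (fun ω => ∑ j ∈ Finset.Icc 1 1, Δ (k - i + 1 + j) j ω)
            = Δ (k - i + 1 + 1) 1 := by
          funext ω; rw [Finset.Icc_self, Finset.sum_singleton]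
        rw [hfun, hlaw1 (k - i + 1 + 1) (by omega) (by omega)]
        congr 1
        have hc : ((k - i + 1 + 1 : ℕ) : ℝ) = (k : ℝ) - i + 2 := by
          push_cast [Nat.cast_sub hik]; ring
        rw [hc]
        push_cast
        ring
      · have hm1 : 1 ≤ m := by omega
        have ihm' := ihm hm1 (by omega)
        have hfun : (fun ω => ∑ j ∈ Finset.Icc 1 (m+1), Δ (k - i + 1 + j) j ω)
            = fun ω => (∑ j ∈ Finset.Icc 1 m, Δ (k - i + 1 + j) j ω)
                + Δ (k - i + 1 + (m+1)) (m+1) ω := by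
          funext ω; rw [Finset.sum_Icc_succ_top (by omega : 1 ≤ m + 1)]
        rw [hfun]
        have hM1 : (1:ℝ) ≤ (n:ℝ) - k + i - 1 := by
          have h1 : (k:ℝ) + 1 ≤ (n:ℝ) := by exact_mod_cast (by omega : k + 1 ≤ n)
          have h2 : (1:ℝ) ≤ (i:ℝ) := by exact_mod_cast hi1
          linarith
        have hMne : ((n:ℝ) - k + i - 1) ≠ 0 := by linarith
        have hnm : (m:ℝ) + 2 ≤ (n:ℝ) := by exact_mod_cast (by omega : m + 2 ≤ n)
        have hc : (0:ℝ) < ((n:ℝ) - (m+1 : ℕ) + 1) * ((n : ℝ) - k + i - 1) := by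
          apply mul_pos _ (by linarith)
          push_cast
          linarith
        have hca : ((n:ℝ) - (m+1 : ℕ) + 1) * ((n : ℝ) - k + i - 1)
            < ((n:ℝ) - (m : ℕ) + 1) * ((n : ℝ) - k + i - 1) := by
          apply mul_lt_mul_of_pos_right _ (by linarith)
          push_cast
          linarith
        set T1 : Finset {p : ℕ × ℕ // 1 ≤ p.2 ∧ p.2 ≤ p.1 ∧ p.1 ≤ n} :=
          (Finset.Icc 1 m).attach.image (fun x =>
            (⟨(k - i + 1 + x.1, x.1), by
              have hx := Finset.mem_Icc.1 x.2
              exact ⟨hx.1, by omega, by omega⟩⟩ :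
                {p : ℕ × ℕ // 1 ≤ p.2 ∧ p.2 ≤ p.1 ∧ p.1 ≤ n})) with hT1
        set p2 : {p : ℕ × ℕ // 1 ≤ p.2 ∧ p.2 ≤ p.1 ∧ p.1 ≤ n} :=
          ⟨(k - i + 1 + (m+1), m+1), by exact ⟨by omega, by omega, by omega⟩⟩ with hp2
        have hmemT1 : ∀ j (hj : j ∈ Finset.Icc 1 m),
            ∀ (pf : 1 ≤ j ∧ j ≤ k - i + 1 + j ∧ k - i + 1 + j ≤ n),
            (⟨(k - i + 1 + j, j), pf⟩ : {p : ℕ × ℕ // 1 ≤ p.2 ∧ p.2 ≤ p.1 ∧ p.1 ≤ n}) ∈ T1 := by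
          intro j hj pf
          rw [hT1]
          exact Finset.mem_image.2 ⟨⟨j, hj⟩, Finset.mem_attach _ _, rfl⟩
        have hXmeas : Measurable[⨆ q ∈ (T1 : Set {p : ℕ × ℕ // 1 ≤ p.2 ∧ p.2 ≤ p.1 ∧ p.1 ≤ n}),
            MeasurableSpace.comap ((fun p : {p : ℕ × ℕ // 1 ≤ p.2 ∧ p.2 ≤ p.1 ∧ p.1 ≤ n} =>
              Δ p.1.1 p.1.2) q) inferInstance]
            (fun ω => ∑ j ∈ Finset.Icc 1 m, Δ (k - i + 1 + j) j ω) := by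
          apply Finset.measurable_sum
          intro j hj
          have hj' := Finset.mem_Icc.1 hj
          exact measurable_iSup_comap _ T1 (hmemT1 j hj ⟨by omega, by omega, by omega⟩)
        have hdisjT : Disjoint T1 {p2} := by
          rw [Finset.disjoint_singleton_right]
          intro hmem
          rw [hT1] at hmem
          obtain ⟨x, _, hx⟩ := Finset.mem_image.1 hmem
          have := congrArg (fun q : {p : ℕ × ℕ // 1 ≤ p.2 ∧ p.2 ≤ p.1 ∧ p.1 ≤ n} => q.1.2) hx
          simp only [hp2] at this
          have hx2 := Finset.mem_Icc.1 x.2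
          omega
        have hXZ : IndepFun (fun ω => ∑ j ∈ Finset.Icc 1 m, Δ (k - i + 1 + j) j ω)
            (Δ (k - i + 1 + (m+1)) (m+1)) μ := by
          have hii := iIndepFun_groups he_meas hindep
            (fun b : Bool => if b then T1 else {p2})
            (by
              intro b b' hne
              rcases b <;> rcases b'
              · exact absurd rfl hne
              · simpa [Function.onFun] using hdisjT.symm
              · simpa [Function.onFun] using hdisjT
              · exact absurd rfl hne)
            (g := fun b => if b then (fun ω => ∑ j ∈ Finset.Icc 1 m, Δ (k - i + 1 + j) j ω)
              else Δ (k - i + 1 + (m+1)) (m+1))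
            (by
              intro b
              rcases b
              · simp only [if_neg Bool.false_ne_true]
                exact measurable_iSup_comap _ {p2} (Finset.mem_singleton_self p2)
              · simp only [if_pos rfl]
                exact hXmeas)
          have := hii.indepFun (i := true) (j := false) (by simp)
          simpa using this
        have hZlaw : Measure.map (Δ (k - i + 1 + (m+1)) (m+1)) μ
            = ENNReal.ofReal ((((n:ℝ) - (m+1 : ℕ) + 1) * ((n:ℝ) - k + i - 1))
                  / (((n:ℝ) - (m : ℕ) + 1) * ((n:ℝ) - k + i - 1))) • Measure.dirac 0
              + ENNReal.ofReal (1 - (((n:ℝ) - (m+1 : ℕ) + 1) * ((n:ℝ) - k + i - 1))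
                  / (((n:ℝ) - (m : ℕ) + 1) * ((n:ℝ) - k + i - 1)))
                • expMeasure (((n:ℝ) - (m+1 : ℕ) + 1) * ((n:ℝ) - k + i - 1)) := by
          rw [hlaw2 (k - i + 1 + (m+1)) (m+1) (by omega) (by omega) (by omega), deltaMixtureLaw]
          have e3 : ((n:ℝ) - (m+1 : ℕ) + 1) * ((n:ℝ) - (k - i + 1 + (m+1) : ℕ) + (m+1 : ℕ))
              = ((n:ℝ) - (m+1 : ℕ) + 1) * ((n:ℝ) - k + i - 1) := by
            congr 1
            push_cast [Nat.cast_sub hik]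
            ring
          have e1 : ((n:ℝ) - (m+1 : ℕ) + 1) / ((n:ℝ) - (m+1 : ℕ) + 2)
              = (((n:ℝ) - (m+1 : ℕ) + 1) * ((n:ℝ) - k + i - 1))
                  / (((n:ℝ) - (m : ℕ) + 1) * ((n:ℝ) - k + i - 1)) := by
            rw [mul_div_mul_right _ _ hMne]
            congr 1
            push_cast
            ring
          have e2 : (1:ℝ) / ((n:ℝ) - (m+1 : ℕ) + 2)
              = 1 - (((n:ℝ) - (m+1 : ℕ) + 1) * ((n:ℝ) - k + i - 1))
                  / (((n:ℝ) - (m : ℕ) + 1) * ((n:ℝ) - k + i - 1)) := by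
            rw [mul_div_mul_right _ _ hMne]
            have hd : ((n:ℝ) - (m : ℕ) + 1) ≠ 0 := by push_cast; linarith
            have hd2 : ((n:ℝ) - (m+1 : ℕ) + 2) = ((n:ℝ) - (m : ℕ) + 1) := by push_cast; ring
            rw [hd2]
            field_simp
            push_cast
            ring
          rw [e3, e1, e2]
        exact exp_add_mixture_law μ
          (by exact Finset.measurable_sum _ (fun j _ => hmeas _ _))
          (hmeas _ _) hXZ hc hca ihm' hZlaw
  intro k hk1 hkn
  have hn2 : 2 ≤ n := by omega
  constructor
  · intro i hi1 hik
    have hfun : (fun ω => r k (i + 1) ω - r k i ω)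
        = fun ω => ∑ j ∈ Finset.Icc 1 i, Δ (k - i + 1 + j) j ω :=
      funext ((rep k hk1 hkn).1 i hi1 hik)
    rw [hfun]
    exact law k i hi1 hik hkn
  · -- independence
    set S : Fin (k + 1) → Finset {p : ℕ × ℕ // 1 ≤ p.2 ∧ p.2 ≤ p.1 ∧ p.1 ≤ n} := fun j =>
      if h : (j : ℕ) < k then
        (Finset.Icc 1 ((j : ℕ) + 1)).attach.image (fun x =>
          (⟨(k - ((j : ℕ) + 1) + 1 + x.1, x.1), by
            have hx := Finset.mem_Icc.1 x.2
            exact ⟨hx.1, by omega, by omega⟩⟩ :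
              {p : ℕ × ℕ // 1 ≤ p.2 ∧ p.2 ≤ p.1 ∧ p.1 ≤ n}))
      else
        insert (⟨(1, 1), ⟨le_rfl, le_rfl, by omega⟩⟩ :
            {p : ℕ × ℕ // 1 ≤ p.2 ∧ p.2 ≤ p.1 ∧ p.1 ≤ n})
          ((Finset.Icc 2 (k + 1)).attach.image (fun x =>
            (⟨(x.1, x.1), by
              have hx := Finset.mem_Icc.1 x.2
              exact ⟨by omega, le_rfl, by omega⟩⟩ :
                {p : ℕ × ℕ // 1 ≤ p.2 ∧ p.2 ≤ p.1 ∧ p.1 ≤ n}))) with hS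
    -- structural membership facts
    have hfst_lt : ∀ (j : Fin (k + 1)) (h : (j : ℕ) < k) p, p ∈ S j →
        p.1.1 = k - ((j : ℕ) + 1) + 1 + p.1.2 ∧ 1 ≤ p.1.2 ∧ p.1.2 ≤ (j : ℕ) + 1 := by
      intro j h p hp
      rw [hS] at hp
      simp only [dif_pos h] at hp
      obtain ⟨x, _, hx⟩ := Finset.mem_image.1 hp
      have hval := congrArg Subtype.val hx
      have h1 : k - ((j : ℕ) + 1) + 1 + x.1 = p.1.1 := congrArg Prod.fst hval
      have h2 : x.1 = p.1.2 := congrArg Prod.snd hval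
      have hx2 := Finset.mem_Icc.1 x.2
      refine ⟨?_, ?_, ?_⟩ <;> omega
    have hfst_eq : ∀ (j : Fin (k + 1)) (h : ¬ (j : ℕ) < k) p, p ∈ S j → p.1.1 = p.1.2 := by
      intro j h p hp
      rw [hS] at hp
      simp only [dif_neg h] at hp
      rcases Finset.mem_insert.1 hp with h1 | h1
      · rw [h1]
      · obtain ⟨x, _, hx⟩ := Finset.mem_image.1 h1
        have hval := congrArg Subtype.val hx
        have h1' : x.1 = p.1.1 := congrArg Prod.fst hval
        have h2' : x.1 = p.1.2 := congrArg Prod.snd hval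
        omega
    have hdisj : Pairwise (Function.onFun Disjoint S) := by
      intro j j' hne
      have hvne : (j : ℕ) ≠ (j' : ℕ) := fun hv => hne (Fin.ext hv)
      rw [Function.onFun]
      rw [Finset.disjoint_left]
      intro p hp hp'
      by_cases h : (j : ℕ) < k <;> by_cases h' : (j' : ℕ) < k
      · obtain ⟨e1, e2, e3⟩ := hfst_lt j h p hp
        obtain ⟨e1', e2', e3'⟩ := hfst_lt j' h' p hp'
        omega
      · obtain ⟨e1, e2, e3⟩ := hfst_lt j h p hp
        have e4 := hfst_eq j' h' p hp'
        omega
      · obtain ⟨e1, e2, e3⟩ := hfst_lt j' h' p hp'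
        have e4 := hfst_eq j h p hp
        omega
      · have hj : (j : ℕ) = k := by omega
        have hj' : (j' : ℕ) = k := by omega
        omega
    -- rewrite the family using the representation
    have hfam : (fun j : Fin (k + 1) => fun ω =>
          if (j : ℕ) < k then r k ((j : ℕ) + 2) ω - r k ((j : ℕ) + 1) ω
          else r (k + 1) 1 ω - r k (k + 1) ω)
        = fun j : Fin (k + 1) => fun ω =>
          if (j : ℕ) < k then
            ∑ l ∈ Finset.Icc 1 ((j : ℕ) + 1), Δ (k - ((j : ℕ) + 1) + 1 + l) l ω
          else Δ 1 1 ω + ∑ l ∈ Finset.Icc 2 (k + 1), Δ l l ω := by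
      funext j ω
      by_cases h : (j : ℕ) < k
      · rw [if_pos h, if_pos h]
        have hrep := (rep k hk1 hkn).1 ((j : ℕ) + 1) (by omega) (by omega) ω
        have h2 : (j : ℕ) + 2 = (j : ℕ) + 1 + 1 := by omega
        rw [h2]
        exact hrep
      · rw [if_neg h, if_neg h]
        exact (rep k hk1 hkn).2 ω
    rw [hfam]
    refine iIndepFun_groups (fun p => hmeas _ _) hindep S hdisj ?_
    intro j
    by_cases h : (j : ℕ) < k
    · simp only [if_pos h]
      apply Finset.measurable_sum
      intro l hl
      have hl' := Finset.mem_Icc.1 hl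
      have hmem : (⟨(k - ((j : ℕ) + 1) + 1 + l, l), ⟨by omega, by omega, by omega⟩⟩ :
          {p : ℕ × ℕ // 1 ≤ p.2 ∧ p.2 ≤ p.1 ∧ p.1 ≤ n}) ∈ S j := by
        rw [hS]
        simp only [dif_pos h]
        exact Finset.mem_image.2 ⟨⟨l, hl⟩, Finset.mem_attach _ _, rfl⟩
      exact measurable_iSup_comap
        (fun p : {p : ℕ × ℕ // 1 ≤ p.2 ∧ p.2 ≤ p.1 ∧ p.1 ≤ n} => Δ p.1.1 p.1.2) (S j) hmem
    · simp only [if_neg h]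
      apply Measurable.add
      · have hmem : (⟨(1, 1), ⟨le_rfl, le_rfl, by omega⟩⟩ :
            {p : ℕ × ℕ // 1 ≤ p.2 ∧ p.2 ≤ p.1 ∧ p.1 ≤ n}) ∈ S j := by
          rw [hS]
          simp only [dif_neg h]
          exact Finset.mem_insert_self _ _
        exact measurable_iSup_comap
          (fun p : {p : ℕ × ℕ // 1 ≤ p.2 ∧ p.2 ≤ p.1 ∧ p.1 ≤ n} => Δ p.1.1 p.1.2) (S j) hmem
      · apply Finset.measurable_sum
        intro l hl
        have hl' := Finset.mem_Icc.1 hl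
        have hmem : (⟨(l, l), ⟨by omega, le_rfl, by omega⟩⟩ :
            {p : ℕ × ℕ // 1 ≤ p.2 ∧ p.2 ≤ p.1 ∧ p.1 ≤ n}) ∈ S j := by
          rw [hS]
          simp only [dif_neg h]
          exact Finset.mem_insert_of_mem
            (Finset.mem_image.2 ⟨⟨l, hl⟩, Finset.mem_attach _ _, rfl⟩)
        exact measurable_iSup_comap
          (fun p : {p : ℕ × ℕ // 1 ≤ p.2 ∧ p.2 ≤ p.1 ∧ p.1 ≤ n} => Δ p.1.1 p.1.2) (S j) hmem
end
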